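/- Let T ∈ ℙ_hom have limit height α < ω₁, and let 𝒞 be a countable set of branches of T. Then there exists T̄ ∈ ℙ_hom with T̄ ≤ T (T̄ end-extends T) such that for every C ∈ 𝒞, the union ⋃C belongs to the α-th level of T̄. -/

import Mathlib

noncomputable section

/-- `ω₁` as an ordinal. -/
def omega1 : Ordinal := (Cardinal.aleph 1).ord

/-- A partial node: a partial function from ordinals into `2 = Fin 2`.
Elements of `2^{<ω₁}` are those whose domain is a (countable) ordinal. -/
abbrev PNode := Ordinal → Option (Fin 2)

/-- `u` is a function with domain `β`, i.e. `u ∈ 2^β`. -/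
def IsNode (u : PNode) (β : Ordinal) : Prop := ∀ γ, (u γ).isSome ↔ γ < β

/-- The extension (inclusion) order on partial functions. -/
def extn (u v : PNode) : Prop := ∀ γ x, u γ = some x → v γ = some x

/-- The translation map `F_{s,t}` for `s, t` of domain `α`:
`F_{s,t}(u)(γ) = u(γ) + t(γ) + s(γ) (mod 2)` for `γ < α`, and `u(γ)` otherwise. -/
def Fmap (α : Ordinal) (s t : PNode) (u : PNode) : PNode :=
  fun γ => (u γ).map (fun x => if γ < α then x + (t γ).getD 0 + (s γ).getD 0 else x)

/-- Restriction of a node below `δ`. -/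
def nrestrict (u : PNode) (δ : Ordinal) : PNode := fun γ => if γ < δ then u γ else none

/-- A subtree of `⟨2^{<ω₁}, ⊆⟩`: a set of functions with countable ordinal domains,
closed under restriction. -/
def Subtree (T : Set PNode) : Prop :=
  (∀ u ∈ T, ∃ β < omega1, IsNode u β) ∧ ∀ u ∈ T, ∀ δ, nrestrict u δ ∈ T

/-- The `α`-th level of `T`. -/
def tlevel (T : Set PNode) (α : Ordinal) : Set PNode := {u ∈ T | IsNode u α}

/-- The height of `T`: the least `α` with `T_α = ∅`. -/
def theight (T : Set PNode) : Ordinal := sInf {α | tlevel T α = ∅}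

/-- `T↾α`: the restriction of `T` below level `α`. -/
def treeRestrict (T : Set PNode) (α : Ordinal) : Set PNode := {u ∈ T | ∃ β < α, IsNode u β}

/-- Normality of a subtree of `2^{<ω₁}`: every non-top node has at least two immediate
successors; at limit levels, nodes are determined by their sets of predecessors
(unique limits); and every node has extensions at all higher levels below the height. -/
def NormalTree (T : Set PNode) : Prop :=
  (∀ u ∈ T, ∀ β, IsNode u β → β + 1 < theight T →
    ∃ v ∈ tlevel T (β + 1), ∃ w ∈ tlevel T (β + 1), v ≠ w ∧ extn u v ∧ extn u w) ∧
  (∀ α : Ordinal, Order.IsSuccLimit α → ∀ v ∈ tlevel T α, ∀ w ∈ tlevel T α,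
    {u ∈ T | extn u v ∧ u ≠ v} = {u ∈ T | extn u w ∧ u ≠ w} → v = w) ∧
  (∀ u ∈ T, ∀ β, IsNode u β → ∀ α, β ≤ α → α < theight T → ∃ v ∈ tlevel T α, extn u v)

/-- Homogeneity: for any `s, t` in the same level, `F_{s,t}` restricts to an
order isomorphism of `T` onto `T`. -/
def Homog (T : Set PNode) : Prop :=
  ∀ α : Ordinal, ∀ s ∈ tlevel T α, ∀ t ∈ tlevel T α,
    Set.BijOn (Fmap α s t) T T ∧
    ∀ u ∈ T, ∀ v ∈ T, (extn u v ↔ extn (Fmap α s t u) (Fmap α s t v))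

/-- The end-extension order on trees: `T ≤ T'` iff `ht T' ≤ ht T` and `T' = T↾ht(T')`. -/
def Tle (T T' : Set PNode) : Prop := theight T' ≤ theight T ∧ T' = treeRestrict T (theight T')

/-- The strict end-extension order on trees: `T < T'` iff `ht T' < ht T` and `T' = T↾ht(T')`. -/
def Tlt (T T' : Set PNode) : Prop := theight T' < theight T ∧ T' = treeRestrict T (theight T')

/-- The poset `ℙ_hom` of countable homogeneous normal subtrees of `2^{<ω₁}`. -/
def Phom : Set (Set PNode) := {T | T.Countable ∧ Subtree T ∧ NormalTree T ∧ Homog T}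

open Classical in
/-- The union `⋃ B` of a family of partial functions (as graphs). -/
def unionNode (B : Set PNode) : PNode :=
  fun γ => if h : ∃ x : Fin 2, ∃ u ∈ B, u γ = some x then some h.choose else none

/-- A branch of `T`: a chain meeting every nonempty level. -/
def TBranch (T B : Set PNode) : Prop :=
  B ⊆ T ∧ IsChain extn B ∧ ∀ α : Ordinal, (tlevel T α).Nonempty → (B ∩ tlevel T α).Nonempty

/-- A branch of `T↾α`: a chain in `T↾α` meeting every level below `α`. -/
def BranchBelow (T : Set PNode) (α : Ordinal) (C : Set PNode) : Prop :=
  C ⊆ treeRestrict T α ∧ IsChain extn C ∧ ∀ β < α, (C ∩ tlevel T β).Nonempty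

/-- The root: the empty function. -/
def emptyNode : PNode := fun _ => none

/-- A condition of `ℙ(T, I, ω₁)`: a function `p : I → T` with countable support. -/
def Cond (T : Set PNode) {ι : Type*} (p : ι → PNode) : Prop :=
  (∀ i, p i ∈ T) ∧ {i | p i ≠ emptyNode}.Countable

/-- The order on `ℙ(T, I, ω₁)`: `p ≤ q` iff `q(i) ≤_T p(i)` for all `i`. -/
def ple {ι : Type*} (p q : ι → PNode) : Prop := ∀ i, extn (q i) (p i)

/-! ### Auxiliary definitions and lemmas for `stmt11` -/

/-- Translation of a partial node by a total `Fin 2`-valued function. -/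
def trans2 (d : Ordinal → Fin 2) (u : PNode) : PNode := fun δ => (u δ).map (fun x => x + d δ)

/-- The difference function of two partial nodes (zero off the domain of `s`). -/
def dpair (s t : PNode) : Ordinal → Fin 2 := fun δ => ((s δ).map (fun x => x + (t δ).getD 0)).getD 0

lemma fin2_self : ∀ d : Fin 2, d + d = 0 := by decide
lemma fin2_cancel : ∀ x y : Fin 2, y + (x + y) = x := by decide
lemma fin2_two : ∀ y g h : Fin 2, (y + g) + (y + h) = g + h := by decide

lemma trans2_trans2 (d e : Ordinal → Fin 2) (u : PNode) :
    trans2 d (trans2 e u) = trans2 (d + e) u := by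
  funext δ
  simp only [trans2, Option.map_map, Pi.add_apply]
  cases u δ with
  | none => rfl
  | some x => simp only [Function.comp, Option.map_some]; congr 1; abel

lemma trans2_zero (u : PNode) : trans2 0 u = u := by
  funext δ; simp [trans2]

lemma trans2_invol (d : Ordinal → Fin 2) (u : PNode) : trans2 d (trans2 d u) = u := by
  rw [trans2_trans2]
  funext δ
  cases hu : u δ with
  | none => simp [trans2, hu]
  | some x =>
    simp only [trans2, hu, Option.map_some, Pi.add_apply]
    congr 1
    rw [fin2_self, add_zero]

lemma trans2_isNode {u : PNode} {β : Ordinal} (d : Ordinal → Fin 2) (h : IsNode u β) :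
    IsNode (trans2 d u) β := by
  intro γ; rw [← h γ]; simp [trans2]

lemma trans2_extn {u v : PNode} (d : Ordinal → Fin 2) (h : extn u v) :
    extn (trans2 d u) (trans2 d v) := by
  intro γ x hx
  simp only [trans2, Option.map_eq_some_iff] at hx ⊢
  obtain ⟨a, ha, rfl⟩ := hx
  exact ⟨a, h γ a ha, rfl⟩

lemma trans2_congr {d e : Ordinal → Fin 2} (u : PNode) (h : ∀ δ, (u δ).isSome → d δ = e δ) :
    trans2 d u = trans2 e u := by
  funext δ
  cases hu : u δ with
  | none => simp [trans2, hu]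
  | some a => simp [trans2, hu, h δ (by simp [hu])]

lemma extn_refl (u : PNode) : extn u u := fun _ _ h => h

lemma isNode_unique {u : PNode} {β γ : Ordinal} (hβ : IsNode u β) (hγ : IsNode u γ) : β = γ := by
  rcases lt_trichotomy β γ with h | h | h
  · exact absurd ((hγ β).2 h) (by rw [hβ β]; exact lt_irrefl β)
  · exact h
  · exact absurd ((hβ γ).2 h) (by rw [hγ γ]; exact lt_irrefl γ)

lemma isNode_nrestrict {u : PNode} {β : Ordinal} (h : IsNode u β) {δ : Ordinal} (hδ : δ ≤ β) :
    IsNode (nrestrict u δ) δ := by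
  intro γ; unfold nrestrict
  split
  · next hγ => simp [h γ, hγ, lt_of_lt_of_le hγ hδ]
  · next hγ => simp [hγ]

lemma extn_nrestrict (u : PNode) (δ : Ordinal) : extn (nrestrict u δ) u := by
  intro γ x h
  unfold nrestrict at h
  split at h
  · exact h
  · exact absurd h (by simp)

lemma nrestrict_eq_self {u : PNode} {β : Ordinal} (h : IsNode u β) {δ : Ordinal} (hδ : β ≤ δ) :
    nrestrict u δ = u := by
  funext γ; unfold nrestrict
  split
  · rfl
  · next hγ =>
    symm
    rw [← Option.not_isSome_iff_eq_none, h γ]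
    exact fun hh => hγ (lt_of_lt_of_le hh hδ)

lemma extn_dom_le {u v : PNode} {β γ : Ordinal} (h : extn u v) (hu : IsNode u β)
    (hv : IsNode v γ) : β ≤ γ := by
  by_contra hlt
  push_neg at hlt
  obtain ⟨x, hx⟩ := Option.isSome_iff_exists.1 ((hu γ).2 hlt)
  have h2 : (v γ).isSome := by simp [h γ x hx]
  rw [hv γ] at h2
  exact lt_irrefl γ h2

lemma nrestrict_trans2 (d : Ordinal → Fin 2) (u : PNode) (δ : Ordinal) :
    nrestrict (trans2 d u) δ = trans2 d (nrestrict u δ) := by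
  funext γ; simp only [nrestrict, trans2]; split <;> simp

lemma Fmap_eq_trans2 {s t : PNode} {γ : Ordinal} (hs : IsNode s γ) (ht : IsNode t γ) (u : PNode) :
    Fmap γ s t u = trans2 (dpair s t) u := by
  funext δ
  unfold Fmap trans2 dpair
  cases hu : u δ with
  | none => rfl
  | some x =>
    simp only [Option.map_some]
    congr 1
    by_cases hδ : δ < γ
    · obtain ⟨a, ha⟩ := Option.isSome_iff_exists.1 ((hs δ).2 hδ)
      obtain ⟨b, hb⟩ := Option.isSome_iff_exists.1 ((ht δ).2 hδ)
      simp only [hδ, if_true, ha, hb, Option.map_some, Option.getD_some]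
      abel
    · have ha : s δ = none := by
        rw [← Option.not_isSome_iff_eq_none, hs δ]; exact hδ
      simp [hδ, ha]

lemma dpair_eq_zero {s : PNode} {γ : Ordinal} (hs : IsNode s γ) (t : PNode) {δ : Ordinal}
    (hδ : γ ≤ δ) : dpair s t δ = 0 := by
  have : s δ = none := by rw [← Option.not_isSome_iff_eq_none, hs δ]; exact not_lt.2 hδ
  simp [dpair, this]

lemma dpair_nrestrict {s t : PNode} {β δ : Ordinal} (hδ : δ < β) :
    dpair (nrestrict s β) (nrestrict t β) δ = dpair s t δ := by
  simp [dpair, nrestrict, hδ]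

lemma unionNode_eq {C : Set PNode} (hch : IsChain extn C) {c : PNode} (hc : c ∈ C)
    {β : Ordinal} (hcβ : IsNode c β) {γ : Ordinal} (hγ : γ < β) : unionNode C γ = c γ := by
  obtain ⟨x, hx⟩ := Option.isSome_iff_exists.1 ((hcβ γ).2 hγ)
  have hex : ∃ y : Fin 2, ∃ u ∈ C, u γ = some y := ⟨x, c, hc, hx⟩
  rw [unionNode, dif_pos hex]
  obtain ⟨u, hu, huγ⟩ := hex.choose_spec
  have : c γ = some hex.choose := by
    rcases eq_or_ne u c with rfl | hne
    · exact huγ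
    · rcases hch hu hc hne with h | h
      · exact h γ _ huγ
      · have h2 : u γ = some x := h γ x hx
        rw [huγ] at h2
        rw [hx, ← h2]
  exact this.symm


/-- Lemma 3: if `T ∈ ℙ_hom` has limit height `α < ω₁` and `𝒞` is a countable set of
branches of `T`, then there is `T̄ ∈ ℙ_hom` end-extending `T` such that `⋃C` lies in the
`α`-th level of `T̄` for every `C ∈ 𝒞`. -/
theorem stmt11 (T : Set PNode) (hT : T ∈ Phom) (α : Ordinal) (hlim : Order.IsSuccLimit α)
    (hα : α < omega1) (hht : theight T = α)
    (𝒞 : Set (Set PNode)) (hcount : 𝒞.Countable) (hbr : ∀ C ∈ 𝒞, TBranch T C) :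
    ∃ S ∈ Phom, Tle S T ∧ ∀ C ∈ 𝒞, unionNode C ∈ tlevel S α := by
  obtain ⟨hTc, hTsub, hTnorm, hThom⟩ := hT
  have hsucc_lt : ∀ γ : Ordinal, γ < α → γ + 1 < α := fun γ hγ => by
    rw [Ordinal.add_one_eq_succ]; exact hlim.succ_lt hγ
  have hlt_succ_self : ∀ γ : Ordinal, γ < γ + 1 := fun γ => by
    rw [Ordinal.add_one_eq_succ]; exact Order.lt_succ γ
  -- basic level facts about `T`
  have hsetne : {γ | tlevel T γ = ∅}.Nonempty := by
    by_contra h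
    rw [Set.not_nonempty_iff_eq_empty] at h
    rw [theight, h, Ordinal.sInf_empty] at hht
    exact hlim.ne_bot hht.symm
  have hlevα : tlevel T α = ∅ := by
    have h := csInf_mem hsetne
    rw [Set.mem_setOf_eq] at h
    rwa [show sInf {γ | tlevel T γ = ∅} = theight T from rfl, hht] at h
  have hlevne : ∀ γ < α, (tlevel T γ).Nonempty := by
    intro γ hγ
    rcases Set.eq_empty_or_nonempty (tlevel T γ) with h | h
    · exfalso
      have h2 : theight T ≤ γ := csInf_le (OrderBot.bddBelow _) h
      rw [hht] at h2
      exact absurd hγ (not_lt.2 h2)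
    · exact h
  have hdom : ∀ u ∈ T, ∃ β < α, IsNode u β := by
    intro u hu
    obtain ⟨β, hβ, huβ⟩ := hTsub.1 u hu
    refine ⟨β, ?_, huβ⟩
    by_contra h
    push_neg at h
    have h1 : nrestrict u α ∈ T := hTsub.2 u hu α
    have h2 : IsNode (nrestrict u α) α := isNode_nrestrict huβ h
    rw [Set.eq_empty_iff_forall_notMem] at hlevα
    exact hlevα _ ⟨h1, h2⟩
  -- branch unions
  have key : ∀ C, TBranch T C → IsNode (unionNode C) α ∧
      ∀ δ < α, nrestrict (unionNode C) δ ∈ tlevel T δ := by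
    rintro C ⟨hCT, hch, hmeet⟩
    have hnode : IsNode (unionNode C) α := by
      intro γ
      constructor
      · intro hsome
        by_cases hex : ∃ x : Fin 2, ∃ u ∈ C, u γ = some x
        · obtain ⟨x, u, hu, hux⟩ := hex
          obtain ⟨β, hβα, huβ⟩ := hdom u (hCT hu)
          exact lt_trans ((huβ γ).1 (by simp [hux])) hβα
        · rw [unionNode, dif_neg hex] at hsome
          simp at hsome
      · intro hγ
        obtain ⟨c, hcC, hcl⟩ := hmeet (γ + 1) (hlevne _ (hsucc_lt γ hγ))
        rw [unionNode_eq hch hcC hcl.2 (hlt_succ_self γ)]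
        exact (hcl.2 γ).2 (hlt_succ_self γ)
    refine ⟨hnode, ?_⟩
    intro δ hδ
    obtain ⟨c, hcC, hcl⟩ := hmeet δ (hlevne δ hδ)
    have heq : nrestrict (unionNode C) δ = c := by
      funext γ
      unfold nrestrict
      split
      · next hγ => exact unionNode_eq hch hcC hcl.2 hγ
      · next hγ =>
        symm
        rw [← Option.not_isSome_iff_eq_none, hcl.2 γ]
        exact hγ
    rw [heq]
    exact hcl
  -- trivial case: no branches
  rcases Set.eq_empty_or_nonempty 𝒞 with rfl | ⟨C₀, hC₀⟩
  · refine ⟨T, ⟨hTc, hTsub, hTnorm, hThom⟩, ⟨le_refl _, ?_⟩, by simp⟩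
    rw [hht]
    ext u
    exact ⟨fun hu => ⟨hu, hdom u hu⟩, fun hu => hu.1⟩
  -- main case
  obtain ⟨hb₀node, hb₀res⟩ := key C₀ (hbr C₀ hC₀)
  set b₀ : PNode := unionNode C₀ with hb₀def
  set Gen : Set (Ordinal → Fin 2) :=
    {d | ∃ γ s t, s ∈ tlevel T γ ∧ t ∈ tlevel T γ ∧ d = dpair s t} ∪
      (fun C => dpair (unionNode C) b₀) '' 𝒞 with hGendef
  set H : AddSubmonoid (Ordinal → Fin 2) := AddSubmonoid.closure Gen with hHdef
  set L : Set PNode := (fun d => trans2 d b₀) '' (H : Set (Ordinal → Fin 2)) with hLdef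
  -- the master invariance lemma
  have master : ∀ d ∈ H, (∀ δ, α ≤ δ → d δ = 0) ∧ ∀ u ∈ T, trans2 d u ∈ T := by
    intro d hd
    rw [hHdef] at hd
    refine AddSubmonoid.closure_induction ?_ ?_ ?_ hd
    · rw [hGendef]
      rintro x (⟨γ, s, t, hs, ht, rfl⟩ | ⟨C, hC, rfl⟩)
      · have hγα : γ < α := by
          obtain ⟨β, hβα, hsβ⟩ := hdom s hs.1
          rwa [isNode_unique hs.2 hsβ]
        constructor
        · intro δ hδ
          exact dpair_eq_zero hs.2 t (le_of_lt (lt_of_lt_of_le hγα hδ))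
        · intro u hu
          rw [← Fmap_eq_trans2 hs.2 ht.2]
          exact (hThom γ s hs t ht).1.mapsTo hu
      · obtain ⟨hCnode, hCres⟩ := key C (hbr C hC)
        constructor
        · intro δ hδ
          exact dpair_eq_zero hCnode b₀ hδ
        · intro u hu
          obtain ⟨β, hβα, huβ⟩ := hdom u hu
          have hcong : trans2 (dpair (unionNode C) b₀) u
              = trans2 (dpair (nrestrict (unionNode C) β) (nrestrict b₀ β)) u := by
            refine trans2_congr u fun δ hδ => ?_
            exact (dpair_nrestrict ((huβ δ).1 hδ)).symm
          rw [hcong, ← Fmap_eq_trans2 (isNode_nrestrict hCnode hβα.le)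
            (isNode_nrestrict hb₀node hβα.le)]
          exact (hThom β _ (hCres β hβα) _ (hb₀res β hβα)).1.mapsTo hu
    · exact ⟨fun _ _ => rfl, fun u hu => by rw [trans2_zero]; exact hu⟩
    · rintro x y hx hy ⟨hx0, hxT⟩ ⟨hy0, hyT⟩
      refine ⟨fun δ hδ => by simp [hx0 δ hδ, hy0 δ hδ], fun u hu => ?_⟩
      rw [← trans2_trans2]
      exact hxT _ (hyT u hu)
  -- facts about `L`
  have hLnode : ∀ u ∈ L, IsNode u α := by
    rw [hLdef]
    rintro u ⟨d, hd, rfl⟩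
    exact trans2_isNode d hb₀node
  have hb₀L : b₀ ∈ L := by
    rw [hLdef]
    exact ⟨0, AddSubmonoid.zero_mem _, trans2_zero b₀⟩
  have h𝒞L : ∀ C ∈ 𝒞, unionNode C ∈ L := by
    intro C hC
    obtain ⟨hCnode, _⟩ := key C (hbr C hC)
    rw [hLdef]
    refine ⟨dpair (unionNode C) b₀, ?_, ?_⟩
    · rw [hHdef]
      exact AddSubmonoid.subset_closure (by rw [hGendef]; exact Or.inr ⟨C, hC, rfl⟩)
    · funext δ
      by_cases hδ : δ < α
      · obtain ⟨x, hx⟩ := Option.isSome_iff_exists.1 ((hCnode δ).2 hδ)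
        obtain ⟨y, hy⟩ := Option.isSome_iff_exists.1 ((hb₀node δ).2 hδ)
        simp only [trans2, dpair, hy, hx, Option.map_some, Option.getD_some]
        rw [fin2_cancel]
      · have h1 : unionNode C δ = none := by
          rw [← Option.not_isSome_iff_eq_none, hCnode δ]; exact hδ
        have h2 : b₀ δ = none := by
          rw [← Option.not_isSome_iff_eq_none, hb₀node δ]; exact hδ
        simp [trans2, h1, h2]
  have hdpairL : ∀ s ∈ L, ∀ t ∈ L, dpair s t ∈ H := by
    rw [hLdef]
    rintro s ⟨g, hg, rfl⟩ t ⟨h2, hh, rfl⟩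
    have heq : dpair (trans2 g b₀) (trans2 h2 b₀) = g + h2 := by
      funext δ
      by_cases hδ : δ < α
      · obtain ⟨y, hy⟩ := Option.isSome_iff_exists.1 ((hb₀node δ).2 hδ)
        simp only [dpair, trans2, hy, Option.map_some, Option.getD_some, Pi.add_apply]
        exact fin2_two y (g δ) (h2 δ)
      · have h1 : b₀ δ = none := by
          rw [← Option.not_isSome_iff_eq_none, hb₀node δ]; exact hδ
        simp only [dpair, trans2, h1, Option.map_none, Option.getD_none, Pi.add_apply]
        rw [(master g hg).1 δ (not_lt.1 hδ), (master h2 hh).1 δ (not_lt.1 hδ), add_zero]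
    rw [heq]
    exact AddSubmonoid.add_mem _ (SetLike.mem_coe.1 hg) (SetLike.mem_coe.1 hh)
  have transS : ∀ d ∈ H, Set.MapsTo (trans2 d) (T ∪ L) (T ∪ L) := by
    intro d hd u hu
    rcases hu with hu | hu
    · exact Or.inl ((master d hd).2 u hu)
    · rw [hLdef] at hu
      obtain ⟨e, he, rfl⟩ := hu
      refine Or.inr ?_
      rw [hLdef]
      exact ⟨d + e, SetLike.mem_coe.2 (AddSubmonoid.add_mem _ hd (SetLike.mem_coe.1 he)),
        (trans2_trans2 d e b₀).symm⟩
  have bijS : ∀ d ∈ H, Set.BijOn (trans2 d) (T ∪ L) (T ∪ L) := by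
    intro d hd
    refine ⟨transS d hd, ?_, ?_⟩
    · intro x _ y _ hxy
      rw [← trans2_invol d x, hxy, trans2_invol]
    · intro y hy
      exact ⟨trans2 d y, transS d hd hy, trans2_invol d y⟩
  have extnS : ∀ (d : Ordinal → Fin 2) (u v : PNode),
      extn u v ↔ extn (trans2 d u) (trans2 d v) := by
    intro d u v
    constructor
    · exact trans2_extn d
    · intro h
      have h2 := trans2_extn d h
      rwa [trans2_invol, trans2_invol] at h2
  -- height of the new tree
  have htS : theight (T ∪ L) = α + 1 := by
    refine IsLeast.csInf_eq ⟨?_, ?_⟩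
    · show tlevel (T ∪ L) (α + 1) = ∅
      rw [Set.eq_empty_iff_forall_notMem]
      rintro u ⟨hu, hunode⟩
      rcases hu with hu | hu
      · obtain ⟨β, hβα, huβ⟩ := hdom u hu
        have hβ : β = α + 1 := isNode_unique huβ hunode
        rw [hβ] at hβα
        exact absurd hβα (not_lt.2 (hlt_succ_self α).le)
      · have hβ : α = α + 1 := isNode_unique (hLnode u hu) hunode
        exact absurd hβ (ne_of_lt (hlt_succ_self α))
    · intro γ hγ
      rw [Set.mem_setOf_eq, Set.eq_empty_iff_forall_notMem] at hγ
      by_contra h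
      push_neg at h
      rw [Ordinal.add_one_eq_succ, Order.lt_succ_iff] at h
      rcases lt_or_eq_of_le h with hltα | rfl
      · obtain ⟨c, hc⟩ := hlevne γ hltα
        exact hγ c ⟨Or.inl hc.1, hc.2⟩
      · exact hγ b₀ ⟨Or.inr hb₀L, hb₀node⟩
  -- countability
  have hGenc : Gen.Countable := by
    rw [hGendef]
    refine Set.Countable.union ?_ (hcount.image _)
    have hsub : {d | ∃ γ s t, s ∈ tlevel T γ ∧ t ∈ tlevel T γ ∧ d = dpair s t}
        ⊆ (fun p : PNode × PNode => dpair p.1 p.2) '' (T ×ˢ T) := by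
      rintro d ⟨γ, s, t, hs, ht, rfl⟩
      exact ⟨(s, t), ⟨hs.1, ht.1⟩, rfl⟩
    exact Set.Countable.mono hsub ((hTc.prod hTc).image _)
  have hHc : (H : Set (Ordinal → Fin 2)).Countable := by
    haveI := hGenc.to_subtype
    have hsub : (H : Set (Ordinal → Fin 2)) ⊆
        Set.range (fun l : List Gen => (l.map Subtype.val).sum) := by
      intro d hd
      rw [hHdef] at hd
      obtain ⟨l, hl, hsum⟩ := AddSubmonoid.exists_list_of_mem_closure (SetLike.mem_coe.1 hd)
      refine ⟨l.attach.map fun y => ⟨y.1, hl y.1 y.2⟩, ?_⟩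
      simp only [List.map_map]
      rw [show (Subtype.val ∘ fun y : {x // x ∈ l} => (⟨y.1, hl y.1 y.2⟩ : Gen))
        = fun y : {x // x ∈ l} => y.1 from rfl]
      rw [List.attach_map_subtype_val, hsum]
    exact Set.Countable.mono hsub (Set.countable_range _)
  have hLc : L.Countable := by
    rw [hLdef]
    exact hHc.image _
  -- the new tree is a subtree
  have hSsub : Subtree (T ∪ L) := by
    constructor
    · rintro u (hu | hu)
      · obtain ⟨β, hβα, huβ⟩ := hdom u hu
        exact ⟨β, lt_trans hβα hα, huβ⟩
      · exact ⟨α, hα, hLnode u hu⟩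
    · rintro u (hu | hu) δ
      · exact Or.inl (hTsub.2 u hu δ)
      · rw [hLdef] at hu
        obtain ⟨e, he, rfl⟩ := hu
        by_cases hδ : α ≤ δ
        · rw [nrestrict_eq_self (trans2_isNode e hb₀node) hδ]
          refine Or.inr ?_
          rw [hLdef]
          exact ⟨e, he, rfl⟩
        · push_neg at hδ
          rw [nrestrict_trans2]
          exact Or.inl ((master e (SetLike.mem_coe.1 he)).2 _ (hb₀res δ hδ).1)
  -- normality
  have hSnorm : NormalTree (T ∪ L) := by
    refine ⟨?_, ?_, ?_⟩
    · intro u hu β huβ hβ1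
      rw [htS] at hβ1
      simp only [Ordinal.add_one_eq_succ, Order.succ_lt_succ_iff] at hβ1
      have huT : u ∈ T := by
        rcases hu with hu | hu
        · exact hu
        · exact absurd (isNode_unique (hLnode u hu) huβ).symm (ne_of_lt hβ1)
      obtain ⟨v, hv, w, hw, hvw, hev, hew⟩ := hTnorm.1 u huT β huβ
        (by rw [hht]; exact hsucc_lt β hβ1)
      exact ⟨v, ⟨Or.inl hv.1, hv.2⟩, w, ⟨Or.inl hw.1, hw.2⟩, hvw, hev, hew⟩
    · intro lam hlam v hv w hw hset
      rcases hv.1 with hvT | hvL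
      · obtain ⟨β, hβα, hvβ⟩ := hdom v hvT
        have hlamα : lam < α := by
          rw [isNode_unique hv.2 hvβ]; exact hβα
        have hwT : w ∈ T := by
          rcases hw.1 with h | h
          · exact h
          · exact absurd (isNode_unique hw.2 (hLnode w h)) (ne_of_lt hlamα)
        have conv : ∀ z : PNode, IsNode z lam →
            {u ∈ T ∪ L | extn u z ∧ u ≠ z} = {u ∈ T | extn u z ∧ u ≠ z} := by
          intro z hz
          ext u
          constructor
          · rintro ⟨hu, h1, h2⟩
            rcases hu with hu | hu
            · exact ⟨hu, h1, h2⟩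
            · exact absurd (extn_dom_le h1 (hLnode u hu) hz) (not_le.2 hlamα)
          · rintro ⟨hu, h1, h2⟩
            exact ⟨Or.inl hu, h1, h2⟩
        rw [conv v hv.2, conv w hw.2] at hset
        exact hTnorm.2.1 lam hlam v ⟨hvT, hv.2⟩ w ⟨hwT, hw.2⟩ hset
      · have hlamα : lam = α := isNode_unique hv.2 (hLnode v hvL)
        subst hlamα
        have hwL : w ∈ L := by
          rcases hw.1 with h | h
          · obtain ⟨β, hβα, hwβ⟩ := hdom w h
            have h2 := isNode_unique hw.2 hwβ
            exact absurd h2 (ne_of_gt hβα)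
          · exact h
        have hvnode := hLnode v hvL
        have hwnode := hLnode w hwL
        funext γ
        by_cases hγ : γ < lam
        · have hγ1 : γ + 1 < lam := hsucc_lt γ hγ
          have huT : nrestrict v (γ + 1) ∈ T := by
            rw [hLdef] at hvL
            obtain ⟨g, hg, rfl⟩ := hvL
            rw [nrestrict_trans2]
            exact (master g (SetLike.mem_coe.1 hg)).2 _ (hb₀res (γ + 1) hγ1).1
          have hunode : IsNode (nrestrict v (γ + 1)) (γ + 1) :=
            isNode_nrestrict hvnode (le_of_lt hγ1)
          have humem : nrestrict v (γ + 1) ∈ {u ∈ T ∪ L | extn u v ∧ u ≠ v} := by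
            refine ⟨Or.inl huT, extn_nrestrict _ _, fun he => ?_⟩
            rw [he] at hunode
            exact absurd (isNode_unique hunode hvnode) (ne_of_lt hγ1)
          rw [hset] at humem
          obtain ⟨_, hew, _⟩ := humem
          obtain ⟨x, hx⟩ := Option.isSome_iff_exists.1 ((hvnode γ).2 hγ)
          have hux : nrestrict v (γ + 1) γ = some x := by
            unfold nrestrict
            rw [if_pos (hlt_succ_self γ)]
            exact hx
          rw [hx, hew γ x hux]
        · have h1 : v γ = none := by
            rw [← Option.not_isSome_iff_eq_none, hvnode γ]; exact hγ
          have h2 : w γ = none := by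
            rw [← Option.not_isSome_iff_eq_none, hwnode γ]; exact hγ
          rw [h1, h2]
    · intro u hu β huβ γ' hβγ' hγ'
      rw [htS] at hγ'
      rw [Ordinal.add_one_eq_succ, Order.lt_succ_iff] at hγ'
      rcases hu with huT | huL
      · obtain ⟨β', hβ'α, huβ'⟩ := hdom u huT
        have hββ' : β = β' := isNode_unique huβ huβ'
        have hβα : β < α := hββ' ▸ hβ'α
        rcases lt_or_eq_of_le hγ' with hlt | rfl
        · obtain ⟨v, hv, hev⟩ := hTnorm.2.2 u huT β huβ γ' hβγ' (by rw [hht]; exact hlt)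
          exact ⟨v, ⟨Or.inl hv.1, hv.2⟩, hev⟩
        · refine ⟨trans2 (dpair u (nrestrict b₀ β)) b₀, ⟨Or.inr ?_, trans2_isNode _ hb₀node⟩, ?_⟩
          · rw [hLdef]
            refine ⟨dpair u (nrestrict b₀ β), ?_, rfl⟩
            rw [hHdef]
            exact AddSubmonoid.subset_closure
              (by rw [hGendef]; exact Or.inl ⟨β, u, nrestrict b₀ β, ⟨huT, huβ⟩, hb₀res β hβα, rfl⟩)
          · intro γ x hx
            have hγβ : γ < β := (huβ γ).1 (by simp [hx])
            obtain ⟨y, hy⟩ := Option.isSome_iff_exists.1 ((hb₀node γ).2 (lt_trans hγβ hβα))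
            show (b₀ γ).map _ = some x
            rw [hy]
            simp only [Option.map_some, dpair, nrestrict, if_pos hγβ, hx, hy,
              Option.getD_some]
            rw [fin2_cancel]
      · have hβeq : β = α := isNode_unique huβ (hLnode u huL)
        have hγ'eq : γ' = α := le_antisymm hγ' (hβeq ▸ hβγ')
        rw [hγ'eq]
        exact ⟨u, ⟨Or.inr huL, hβeq ▸ huβ⟩, extn_refl u⟩
  -- homogeneity
  have hShom : Homog (T ∪ L) := by
    intro γ s hs t ht
    have hd : dpair s t ∈ H := by
      rcases hs.1 with hsT | hsL
      · have hγα : γ < α := by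
          obtain ⟨β, hβα, hsβ⟩ := hdom s hsT
          rwa [isNode_unique hs.2 hsβ]
        have htT : t ∈ T := by
          rcases ht.1 with h | h
          · exact h
          · exact absurd (isNode_unique ht.2 (hLnode t h)) (ne_of_lt hγα)
        rw [hHdef]
        exact AddSubmonoid.subset_closure
          (by rw [hGendef]; exact Or.inl ⟨γ, s, t, ⟨hsT, hs.2⟩, ⟨htT, ht.2⟩, rfl⟩)
      · have hγα : γ = α := isNode_unique hs.2 (hLnode s hsL)
        have htL : t ∈ L := by
          rcases ht.1 with h | h
          · obtain ⟨β, hβα, htβ⟩ := hdom t h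
            have h2 := isNode_unique ht.2 htβ
            rw [hγα] at h2
            exact absurd h2 (ne_of_gt hβα)
          · exact h
        exact hdpairL s hsL t htL
    constructor
    · exact (bijS _ hd).congr fun u _ => (Fmap_eq_trans2 hs.2 ht.2 u).symm
    · intro u hu v hv
      rw [Fmap_eq_trans2 hs.2 ht.2 u, Fmap_eq_trans2 hs.2 ht.2 v]
      exact extnS _ u v
  -- assembling
  refine ⟨T ∪ L, ⟨hTc.union hLc, hSsub, hSnorm, hShom⟩, ⟨?_, ?_⟩, ?_⟩
  · rw [hht, htS]
    exact (hlt_succ_self α).le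
  · rw [hht]
    ext u
    constructor
    · intro hu
      exact ⟨Or.inl hu, hdom u hu⟩
    · rintro ⟨hu | hu, β, hβα, huβ⟩
      · exact hu
      · exact absurd (isNode_unique huβ (hLnode u hu)) (ne_of_lt hβα)
  · intro C hC
    exact ⟨Or.inr (h𝒞L C hC), (key C (hbr C hC)).1⟩

end
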